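/- There exists a constant c > 0, depending only on k1 and k2 and independent of N, K, L and f, such that if ũᵃ is the atomistic solution and uᶜ* is the continuum lifting of ũᵃ, then ‖ũᵃ − uᶜ*‖_{ℓ²({K,…,N̄})} ≤ c (N−K)² ‖Δ1² ũᵃ‖_{ℓ²({K+1,…,N−2})}. -/

import Mathlib

/-- Discrete Dirichlet problem bound: if `e 0 = e M = 0` and the second
differences of `e` are given by `h`, then `e` is uniformly bounded by
`2 * M` times the `ℓ¹` norm of `h`. -/
lemma dirichlet_linf_bound (M : ℕ) (hM : 1 ≤ M) (e h : ℕ → ℝ)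
    (he0 : e 0 = 0) (heM : e M = 0)
    (hrec : ∀ m : ℕ, m + 2 ≤ M → e m - 2 * e (m+1) + e (m+2) = h (m+1)) :
    ∀ m ≤ M, |e m| ≤ 2 * M * ∑ j ∈ Finset.Icc 1 (M-1), |h j| := by
  set S := ∑ j ∈ Finset.Icc 1 (M-1), |h j| with hSdef
  have hS0 : 0 ≤ S := Finset.sum_nonneg fun j _ => abs_nonneg _
  set s : ℕ → ℝ := fun m => e (m+1) - e m with hs
  set T : ℕ → ℝ := fun p => ∑ j ∈ Finset.Icc 1 p, h j with hT
  have claim1 : ∀ m : ℕ, m + 1 ≤ M → s m = s 0 + T m := by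
    intro m
    induction m with
    | zero => intro _; simp [hT]
    | succ m ih =>
      intro hm
      have h1 : s (m+1) = s m + h (m+1) := by
        have := hrec m (by omega)
        simp only [hs]
        linarith
      have h2 : T (m+1) = T m + h (m+1) := by
        simp only [hT]
        rw [Finset.sum_Icc_succ_top (by omega)]
      rw [h1, ih (by omega), h2]; ring
  have hTbound : ∀ p : ℕ, p + 1 ≤ M → |T p| ≤ S := by
    intro p hp
    calc |T p| ≤ ∑ j ∈ Finset.Icc 1 p, |h j| := Finset.abs_sum_le_sum_abs _ _
    _ ≤ S := Finset.sum_le_sum_of_subset_of_nonneg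
        (Finset.Icc_subset_Icc_right (by omega)) (fun j _ _ => abs_nonneg _)
  have claim2 : ∀ m : ℕ, m ≤ M → e m = m * s 0 + ∑ p ∈ Finset.range m, T p := by
    intro m
    induction m with
    | zero => intro _; simpa using he0
    | succ m ih =>
      intro hm
      have hstep : e (m+1) = e m + s m := by simp [hs]
      rw [hstep, ih (by omega), claim1 m (by omega), Finset.sum_range_succ]
      push_cast; ring
  have hsumT : ∀ m : ℕ, m ≤ M → |∑ p ∈ Finset.range m, T p| ≤ m * S := by
    intro m hm
    calc |∑ p ∈ Finset.range m, T p| ≤ ∑ p ∈ Finset.range m, |T p| :=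
        Finset.abs_sum_le_sum_abs _ _
      _ ≤ ∑ _p ∈ Finset.range m, S :=
        Finset.sum_le_sum fun p hp => hTbound p (by
          have := Finset.mem_range.mp hp; omega)
      _ = m * S := by simp [mul_comm]
  have hs0 : |s 0| ≤ S := by
    have hM0 : e M = M * s 0 + ∑ p ∈ Finset.range M, T p := claim2 M le_rfl
    have hkey : (M:ℝ) * s 0 = - ∑ p ∈ Finset.range M, T p := by
      rw [heM] at hM0; linarith
    have h1 : |(M:ℝ)| * |s 0| ≤ M * S := by
      rw [← abs_mul, hkey, abs_neg]; exact hsumT M le_rfl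
    have hMpos : (0:ℝ) < M := by exact_mod_cast hM
    rw [abs_of_pos hMpos] at h1
    nlinarith [abs_nonneg (s 0)]
  intro m hm
  have hmR : (m:ℝ) ≤ M := by exact_mod_cast hm
  rw [claim2 m hm]
  have hMn : (0:ℝ) ≤ (M:ℝ) := by positivity
  calc |(m:ℝ) * s 0 + ∑ p ∈ Finset.range m, T p|
      ≤ |(m:ℝ) * s 0| + |∑ p ∈ Finset.range m, T p| := abs_add_le _ _
    _ ≤ (M:ℝ) * S + (M:ℝ) * S := by
        refine add_le_add ?_ (le_trans (hsumT m hm) (by nlinarith))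
        rw [abs_mul, abs_of_nonneg (by positivity : (0:ℝ) ≤ (m:ℝ))]
        exact mul_le_mul hmR hs0 (abs_nonneg _) hMn
    _ = 2 * M * S := by ring

set_option maxHeartbeats 1000000 in
/-- the continuum modeling error on the continuum subdomain
(estimate (CBound) of the paper). -/
theorem continuum_lifting_modeling_error (k1 k2 : ℝ)
    (hk1 : 0 < k1) (hk2 : k2 < 0) (hk : 0 < k1 + 4 * k2) :
    ∃ c : ℝ, 0 < c ∧
      ∀ (N K L : ℤ), 5 ≤ N → 0 < K → K < L → L ≤ N - 1 →
      ∀ (f ua ucstar : ℤ → ℝ),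
        -- ua is the atomistic solution
        (∀ i, 2 ≤ i → i ≤ N - 2 →
          -k1 * (ua (i - 1) - 2 * ua i + ua (i + 1))
            - k2 * (ua (i - 2) - 2 * ua i + ua (i + 2)) = f i) →
        ua 0 = 0 → ua 1 = 0 → ua (N - 1) = 0 → ua N = 0 →
        -- ucstar is the continuum lifting of ua
        (∀ i, K + 1 ≤ i → i ≤ N - 2 →
          -(k1 + 4 * k2) * (ucstar (i - 1) - 2 * ucstar i + ucstar (i + 1)) = f i) →
        ucstar K = ua K → ucstar (N - 1) = 0 →
        Real.sqrt (∑ i ∈ Finset.Icc K (N - 1), (ua i - ucstar i) ^ 2) ≤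
          c * ((N : ℝ) - (K : ℝ)) ^ 2 *
            Real.sqrt (∑ i ∈ Finset.Icc (K + 1) (N - 2),
              (ua (i - 2) - 4 * ua (i - 1) + 6 * ua i - 4 * ua (i + 1)
                + ua (i + 2)) ^ 2) := by
  set kc := k1 + 4 * k2 with hkc
  set α : ℝ := (-k2) / kc with hα
  have hαpos : 0 < α := div_pos (by linarith) hk
  refine ⟨2 * α, by positivity, ?_⟩
  intro N K L hN hK hKL hLN f ua ucstar ha hua0 hua1 huaN1 huaN hc hcK hcN1
  have hKN2 : K ≤ N - 2 := by omega
  set M : ℕ := (N - 1 - K).toNat with hMdef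
  have hMZ : (M : ℤ) = N - 1 - K := Int.toNat_of_nonneg (by omega)
  have hM1 : 1 ≤ M := by omega
  set E : ℕ → ℝ := fun m => ua (K + (m:ℤ)) - ucstar (K + (m:ℤ)) with hE
  set G : ℕ → ℝ := fun m =>
    ua (K + (m:ℤ) - 2) - 4 * ua (K + (m:ℤ) - 1) + 6 * ua (K + (m:ℤ))
      - 4 * ua (K + (m:ℤ) + 1) + ua (K + (m:ℤ) + 2) with hG
  set H : ℕ → ℝ := fun m => α * G m with hH
  -- the recurrence
  have hrec : ∀ m : ℕ, m + 2 ≤ M → E m - 2 * E (m+1) + E (m+2) = H (m+1) := by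
    intro m hm
    have hmZ : (m : ℤ) + 2 ≤ N - 1 - K := by omega
    set i : ℤ := K + (m:ℤ) + 1 with hi
    have ha' := ha i (by omega) (by omega)
    have hc' := hc i (by omega) (by omega)
    have e1 : i - 1 = K + (m:ℤ) := by omega
    have e2 : i + 1 = K + ((m:ℤ) + 1) + 1 := by omega
    have e3 : i - 2 = K + ((m:ℤ) + 1) - 2 := by omega
    have e4 : i + 2 = K + ((m:ℤ) + 1) + 2 := by omega
    have e5 : (i:ℤ) = K + ((m:ℤ) + 1) := by omega
    rw [e1] at ha' hc'
    rw [e2, e3, e4] at ha'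
    rw [e2] at hc'
    rw [e5] at ha' hc'
    simp only [hE, hH, hG, hα]
    push_cast
    have h1 : K + ((m:ℤ) + 1) - 1 = K + (m:ℤ) := by ring
    rw [h1]
    have h2 : K + ((m:ℤ) + 2) = K + ((m:ℤ) + 1) + 1 := by ring
    rw [h2]
    have hkc0 : kc ≠ 0 := ne_of_gt hk
    rw [div_mul_eq_mul_div, eq_div_iff hkc0, hkc]
    rw [hkc] at hc'
    linear_combination hc' - ha'
  have hE0 : E 0 = 0 := by simp [hE, hcK]
  have hEM : E M = 0 := by
    have : K + (M:ℤ) = N - 1 := by omega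
    simp [hE, this, huaN1, hcN1]
  have hbound := dirichlet_linf_bound M hM1 E H hE0 hEM hrec
  set S := ∑ j ∈ Finset.Icc 1 (M-1), |H j| with hSdef
  have hS0 : 0 ≤ S := Finset.sum_nonneg fun j _ => abs_nonneg _
  -- reindex the two sums
  have hsum1 : ∑ i ∈ Finset.Icc K (N - 1), (ua i - ucstar i) ^ 2
      = ∑ m ∈ Finset.range (M+1), (E m) ^ 2 := by
    refine Finset.sum_nbij' (fun i => (i - K).toNat) (fun m => K + (m:ℤ))
      ?_ ?_ ?_ ?_ ?_
    · intro a haa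
      simp only [Finset.mem_Icc] at haa
      simp only [Finset.mem_range]
      omega
    · intro b hb
      simp only [Finset.mem_range] at hb
      simp only [Finset.mem_Icc]
      omega
    · intro a haa
      simp only [Finset.mem_Icc] at haa
      show K + (((a - K).toNat : ℕ) : ℤ) = a
      omega
    · intro b _
      show ((K + (b:ℤ) - K).toNat) = b
      omega
    · intro a haa
      simp only [Finset.mem_Icc] at haa
      have h0 : K + (((a - K).toNat : ℕ) : ℤ) = a := by omega
      simp only [hE, h0]
  have hsum2 : ∑ i ∈ Finset.Icc (K + 1) (N - 2),
 (ua (i - 2) - 4 * ua (i - 1) + 6 * ua i - 4 * ua (i + 1) + ua (i + 2)) ^ 2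
      = ∑ m ∈ Finset.Icc 1 (M-1), (G m) ^ 2 := by
    refine Finset.sum_nbij' (fun i => (i - K).toNat) (fun m => K + (m:ℤ))
      ?_ ?_ ?_ ?_ ?_
    · intro a haa
      simp only [Finset.mem_Icc] at haa ⊢
      omega
    · intro b hb
      simp only [Finset.mem_Icc] at hb ⊢
      omega
    · intro a haa
      simp only [Finset.mem_Icc] at haa
      show K + (((a - K).toNat : ℕ) : ℤ) = a
      omega
    · intro b _
      show ((K + (b:ℤ) - K).toNat) = b
      omega
    · intro a haa
      simp only [Finset.mem_Icc] at haa
      have h0 : K + (((a - K).toNat : ℕ) : ℤ) = a := by omega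
      simp only [hG, h0]
  rw [hsum1, hsum2]
  set Q := ∑ m ∈ Finset.Icc 1 (M-1), (G m) ^ 2 with hQdef
  have hQ0 : 0 ≤ Q := Finset.sum_nonneg fun m _ => sq_nonneg _
  -- Cauchy–Schwarz on S
  have hScs : S ^ 2 ≤ (M:ℝ) * (α^2 * Q) := by
    have h1 : S ^ 2 ≤ ((Finset.Icc 1 (M-1)).card : ℝ) *
        ∑ j ∈ Finset.Icc 1 (M-1), |H j| ^ 2 := by
      exact sq_sum_le_card_mul_sum_sq
    have hcard : ((Finset.Icc 1 (M-1)).card : ℝ) ≤ (M:ℝ) := by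
      have h0 : (Finset.Icc 1 (M-1)).card ≤ M := by
        rw [Nat.card_Icc]; omega
      exact_mod_cast h0
    have h2 : ∑ j ∈ Finset.Icc 1 (M-1), |H j| ^ 2 = α^2 * Q := by
      rw [hQdef, Finset.mul_sum]
      refine Finset.sum_congr rfl fun j _ => ?_
      rw [sq_abs, hH]
      ring
    rw [h2] at h1
    refine h1.trans ?_
    have : 0 ≤ α^2 * Q := by positivity
    nlinarith
  -- bound the squared ℓ² norm
  have hE2 : ∑ m ∈ Finset.range (M+1), (E m) ^ 2
      ≤ (2 * α)^2 * ((M:ℝ)+1) ^ 4 * Q := by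
    have hstep : ∀ m ∈ Finset.range (M+1), (E m)^2 ≤ (2 * M * S)^2 := by
      intro m hm
      have hmM : m ≤ M := by have := Finset.mem_range.mp hm; omega
      have := hbound m hmM
      have h0 : (0:ℝ) ≤ 2 * M * S := by positivity
      nlinarith [abs_nonneg (E m), sq_abs (E m)]
    calc ∑ m ∈ Finset.range (M+1), (E m) ^ 2
        ≤ ∑ _m ∈ Finset.range (M+1), (2 * M * S)^2 := Finset.sum_le_sum hstep
      _ = ((M:ℝ)+1) * (2*M*S)^2 := by
          rw [Finset.sum_const, Finset.card_range]; push_cast; ring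
      _ = ((M:ℝ)+1) * (4*(M:ℝ)^2) * S^2 := by ring
      _ ≤ ((M:ℝ)+1) * (4*(M:ℝ)^2) * ((M:ℝ) * (α^2 * Q)) := by
          have hMn : (0:ℝ) ≤ (M:ℝ) := by positivity
          have : (0:ℝ) ≤ ((M:ℝ)+1) * (4*(M:ℝ)^2) := by positivity
          nlinarith
      _ ≤ (2 * α)^2 * ((M:ℝ)+1) ^ 4 * Q := by
          have hMn : (0:ℝ) ≤ (M:ℝ) := by positivity
          nlinarith [sq_nonneg α, hQ0, hMn]
  have hNK : (M:ℝ) + 1 = (N:ℝ) - (K:ℝ) := by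
    have : (M:ℤ) + 1 = N - K := by omega
    exact_mod_cast this
  calc Real.sqrt (∑ m ∈ Finset.range (M+1), (E m) ^ 2)
      ≤ Real.sqrt ((2 * α)^2 * ((M:ℝ)+1) ^ 4 * Q) := Real.sqrt_le_sqrt hE2
    _ = 2 * α * ((N:ℝ) - (K:ℝ))^2 * Real.sqrt Q := by
        rw [show (2 * α)^2 * ((M:ℝ)+1) ^ 4 * Q
            = (2 * α * ((M:ℝ)+1)^2)^2 * Q by ring,
          Real.sqrt_mul (sq_nonneg _), Real.sqrt_sq (by positivity), hNK]
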